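/- arXiv:2404.17432 — 5 statements merged into one kernel-verified Lean document; each statement's English description precedes it below -/
import Mathlib

section
/- If D is a hook diagram, then its Kohnert poset P(D) is bounded; in particular, for D = H(r_1,r_2;C), the unique minimal element of P(D) is H(1, r_2−r_1+1; C). -/
namespace KohnertPaper

abbrev Diagram := Finset (ℕ × ℕ)

/-- `D'` is obtained from `D` by a single Kohnert move: the rightmost cell `(r,c)` of row `r`
moves down its column to the first empty position `(r',c)` below it. -/
def KMove (D D' : Diagram) : Prop :=
  ∃ r c r' : ℕ, 1 ≤ r' ∧ r' < r ∧ (r, c) ∈ D ∧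
    (∀ c', c < c' → (r, c') ∉ D) ∧
    (r', c) ∉ D ∧
    (∀ r₁, r' < r₁ → r₁ < r → (r₁, c) ∈ D) ∧
    D' = insert (r', c) (D.erase (r, c))

/-- `KReach D T` : `T` is obtainable from `D` by a (possibly empty) sequence of Kohnert moves. -/
def KReach : Diagram → Diagram → Prop := Relation.ReflTransGen KMove

/-- The underlying set of the Kohnert poset of `D`. -/
def KD (D : Diagram) : Set Diagram := {T | KReach D T}

/-- The order of the Kohnert poset: `X ⪯ Y` iff `X` is obtainable from `Y` by Kohnert moves. -/
def KLe (X Y : Diagram) : Prop := KReach Y X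

variable {α : Type*}

/-- A chain of the poset `(P, le)`, i.e. a face of the order complex. -/
def IsPChain (le : α → α → Prop) (P : Set α) (s : Finset α) : Prop :=
  ↑s ⊆ P ∧ ∀ x ∈ s, ∀ y ∈ s, le x y ∨ le y x

/-- A facet of the order complex of `(P, le)`: a maximal chain. -/
def IsFacet (le : α → α → Prop) (P : Set α) (s : Finset α) : Prop :=
  IsPChain le P s ∧ ∀ t : Finset α, IsPChain le P t → s ⊆ t → s = t

/-- Shellability of the order complex of the poset `(P, le)`: there is an ordering
`F_0, …, F_{t-1}` of all its facets such that for each `k ≥ 1` the complex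
`(⋃_{i<k} F̄_i) ∩ F̄_k` is pure of dimension `dim F_k − 1`. -/
def Shellable (le : α → α → Prop) (P : Set α) : Prop :=
  ∃ L : List (Finset α), L.Nodup ∧ (∀ s, IsFacet le P s ↔ s ∈ L) ∧
    ∀ k : Fin L.length, 1 ≤ (k : ℕ) →
      ∀ σ : Finset α, σ ⊆ L.get k →
        (∃ i : Fin L.length, (i : ℕ) < (k : ℕ) ∧ σ ⊆ L.get i) →
        ∃ τ : Finset α, σ ⊆ τ ∧ τ ⊆ L.get k ∧
          (∃ i : Fin L.length, (i : ℕ) < (k : ℕ) ∧ τ ⊆ L.get i) ∧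
          τ.card + 1 = (L.get k).card

/-- A poset is pure if all facets of its order complex have the same cardinality. -/
def Pure (le : α → α → Prop) (P : Set α) : Prop :=
  ∀ s t : Finset α, IsFacet le P s → IsFacet le P t → s.card = t.card

/-- A poset is bounded if it has a unique minimal and a unique maximal element. -/
def Bounded (le : α → α → Prop) (P : Set α) : Prop :=
  (∃ m ∈ P, ∀ x ∈ P, le m x) ∧ ∃ M ∈ P, ∀ x ∈ P, le x M

/-- `y` covers `x` in the poset `(P, le)`. -/
def CoversIn (le : α → α → Prop) (P : Set α) (x y : α) : Prop :=
  x ∈ P ∧ y ∈ P ∧ le x y ∧ x ≠ y ∧ ∀ z ∈ P, le x z → le z y → z = x ∨ z = y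

/-- The closed interval `[x,y]` of `(P, le)`. -/
def intervalSet (le : α → α → Prop) (P : Set α) (x y : α) : Set α :=
  {z ∈ P | le x z ∧ le z y}

/-- A saturated (maximal) chain of the interval `[x,y]`, recorded as a list going
from `x` up to `y` through covering relations of the interval. -/
def IsSatChain (le : α → α → Prop) (P : Set α) (x y : α) (c : List α) : Prop :=
  c ≠ [] ∧ c.head? = some x ∧ c.getLast? = some y ∧
    List.Chain' (CoversIn le (intervalSet le P x y)) c

/-- The word of edge labels along a chain. -/
def labelWord (lab : α → α → ℤ) (c : List α) : List ℤ :=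
  (c.zip c.tail).map fun p => lab p.1 p.2

/-- EL-shellability: there is an integer edge labeling such that every interval `[x,y]`
has a unique rising maximal chain, which is lexicographically strictly smaller than every
other maximal chain of the interval. -/
def ELShellable (le : α → α → Prop) (P : Set α) : Prop :=
  ∃ lab : α → α → ℤ,
    ∀ x ∈ P, ∀ y ∈ P, le x y →
      ∃ c : List α, IsSatChain le P x y c ∧
        List.Pairwise (· ≤ ·) (labelWord lab c) ∧
        (∀ c', IsSatChain le P x y c' → List.Pairwise (· ≤ ·) (labelWord lab c') → c' = c) ∧
        ∀ c', IsSatChain le P x y c' → c' ≠ c →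
          List.Lex (· < ·) (labelWord lab c) (labelWord lab c')

/-- The diagram `H(r₁,r₂;C)`. -/
def hookSeed (r1 r2 : ℕ) (C : Finset ℕ) (hC : C.Nonempty) : Diagram :=
  C.image (fun c => (r2, c)) ∪ (Finset.Icc r1 r2).image fun j => (j, C.max' hC)

/-- A hook diagram: a diagram obtainable from some `H(r₁,r₂;C)` by Kohnert moves. -/
def IsHookDiagram (D : Diagram) : Prop :=
  ∃ (r1 r2 : ℕ) (C : Finset ℕ) (hC : C.Nonempty),
    1 ≤ r1 ∧ r1 ≤ r2 ∧ (∀ c ∈ C, 1 ≤ c) ∧ KReach (hookSeed r1 r2 C hC) D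

/-- The key diagram of the weak composition `(a 1, …, a n)`. -/
def keyDiagram (n : ℕ) (a : ℕ → ℕ) : Diagram :=
  (Finset.Icc 1 n).biUnion fun i => (Finset.Icc 1 (a i)).image fun j => (i, j)

/-- Number of cells of `T` in row `r`. -/
def rowCount (T : Diagram) (r : ℕ) : ℕ := (T.filter fun p => p.1 = r).card

/-- The Kohnert polynomial of `D` is multiplicity free iff distinct diagrams of `KD(D)`
have distinct weights (row-count vectors). -/
def MultFree (D : Diagram) : Prop :=
  ∀ T1 ∈ KD D, ∀ T2 ∈ KD D, (∀ r, rowCount T1 r = rowCount T2 r) → T1 = T2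

/-- The key diagram of a weak composition given as a list. -/
def keyDiagramL (l : List ℕ) : Diagram := keyDiagram l.length fun i => l.getD (i - 1) 0

/-! Auxiliary development -/

def HookInv (cm s : ℕ) (C : Finset ℕ) (T : Diagram) : Prop :=
  (∀ p ∈ T, p.2 ∈ C ∧ 1 ≤ p.1) ∧
  (T.filter fun p => p.2 = cm).card = s ∧
  (∀ c ∈ C, c ≠ cm → (T.filter fun p => p.2 = c).card = 1) ∧
  ∀ p ∈ T, ∀ q ∈ T, p.2 = cm → q.2 ≠ cm → p.1 ≤ q.1

def wt (T : Diagram) : ℕ := T.sum fun p => p.1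

lemma wt_lt_of_KMove {T T' : Diagram} (h : KMove T T') : wt T' < wt T := by
  obtain ⟨r, c, r', h1, h2, hmem, _, hnot, _, rfl⟩ := h
  have hne : (r', c) ∉ T.erase (r, c) := fun h => hnot (Finset.mem_of_mem_erase h)
  have he : (T.erase (r, c)).sum (fun p => p.1) + r = wt T := by
    simpa [wt] using Finset.sum_erase_add T (fun p : ℕ × ℕ => p.1) hmem
  have hi : wt (insert (r', c) (T.erase (r, c)))
      = r' + (T.erase (r, c)).sum (fun p => p.1) := Finset.sum_insert hne
  omega

lemma filter_card_move {T : Diagram} {r c r' d : ℕ} (hmem : (r, c) ∈ T) (hnot : (r', c) ∉ T) :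
    ((insert (r', c) (T.erase (r, c))).filter fun p => p.2 = d).card
      = (T.filter fun p => p.2 = d).card := by
  by_cases hd : d = c
  · subst hd
    have h1 : ((insert (r', d) (T.erase (r, d))).filter fun p => p.2 = d)
        = insert (r', d) ((T.filter fun p => p.2 = d).erase (r, d)) := by
      ext p
      simp only [Finset.mem_filter, Finset.mem_insert, Finset.mem_erase]
      constructor
      · rintro ⟨h | ⟨hne, hp⟩, hcol⟩
        · exact Or.inl h
        · exact Or.inr ⟨hne, hp, hcol⟩
      · rintro (rfl | ⟨hne, hp, hcol⟩)
        · exact ⟨Or.inl rfl, rfl⟩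
        · exact ⟨Or.inr ⟨hne, hp⟩, hcol⟩
    have hmf : (r, d) ∈ T.filter (fun p => p.2 = d) := Finset.mem_filter.2 ⟨hmem, rfl⟩
    rw [h1, Finset.card_insert_of_notMem (by
      simp only [Finset.mem_erase, Finset.mem_filter]
      rintro ⟨-, hp, -⟩; exact hnot hp), Finset.card_erase_of_mem hmf]
    have : 1 ≤ (T.filter fun p => p.2 = d).card := Finset.card_pos.2 ⟨_, hmf⟩
    omega
  · congr 1
    ext p
    simp only [Finset.mem_filter, Finset.mem_insert, Finset.mem_erase]
    constructor
    · rintro ⟨h | ⟨_, hp⟩, hcol⟩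
      · subst h; exact (hd hcol.symm).elim
      · exact ⟨hp, hcol⟩
    · rintro ⟨hp, hcol⟩
      refine ⟨Or.inr ⟨?_, hp⟩, hcol⟩
      rintro rfl; exact hd hcol.symm

lemma hookInv_move {cm s : ℕ} {C : Finset ℕ} {T T' : Diagram}
    (hmax : ∀ c ∈ C, c ≤ cm)
    (hI : HookInv cm s C T) (hm : KMove T T') : HookInv cm s C T' := by
  obtain ⟨hcol, hcm, hone, hbelow⟩ := hI
  obtain ⟨r, c, r', hr'1, hr'r, hmem, hright, hnotin, hbetween, rfl⟩ := hm
  have hcC : c ∈ C := (hcol _ hmem).1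
  have hmemT' : ∀ p : ℕ × ℕ,
      p ∈ insert (r', c) (T.erase (r, c)) ↔ p = (r', c) ∨ (p ∈ T ∧ p ≠ (r, c)) := by
    intro p
    simp only [Finset.mem_insert, Finset.mem_erase]
    tauto
  refine ⟨?_, ?_, ?_, ?_⟩
  · intro p hp
    rcases (hmemT' p).1 hp with rfl | ⟨hp, _⟩
    · exact ⟨hcC, hr'1⟩
    · exact hcol p hp
  · rw [filter_card_move hmem hnotin]; exact hcm
  · intro d hd hdne; rw [filter_card_move hmem hnotin]; exact hone d hd hdne
  · intro p hp q hq hpcm hqcm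
    rcases (hmemT' p).1 hp with rfl | ⟨hpT, hpne⟩
    · rcases (hmemT' q).1 hq with rfl | ⟨hqT, _⟩
      · exact absurd hpcm hqcm
      · have : r ≤ q.1 := hbelow (r, c) hmem q hqT hpcm hqcm
        simp only []
        omega
    · rcases (hmemT' q).1 hq with rfl | ⟨hqT, _⟩
      · have hccm : c ≠ cm := hqcm
        have hplr : p.1 ≤ r := hbelow p hpT (r, c) hmem hpcm hccm
        by_contra hlt
        push_neg at hlt
        have hpr : p.1 ≠ r := by
          rintro heq
          have hpe : p = (r, cm) := Prod.ext heq hpcm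
          rw [hpe] at hpT
          exact hright cm (lt_of_le_of_ne (hmax c hcC) hccm) hpT
        have hbet : (p.1, c) ∈ T := hbetween p.1 hlt (lt_of_le_of_ne hplr hpr)
        obtain ⟨e, he⟩ := Finset.card_eq_one.1 (hone c hcC hccm)
        have e1 : (p.1, c) ∈ T.filter (fun p => p.2 = c) := Finset.mem_filter.2 ⟨hbet, rfl⟩
        have e2 : (r, c) ∈ T.filter (fun p => p.2 = c) := Finset.mem_filter.2 ⟨hmem, rfl⟩
        rw [he, Finset.mem_singleton] at e1 e2
        have h' := e1.trans e2.symm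
        simp only [Prod.mk.injEq] at h'
        omega
      · exact hbelow p hpT q hqT hpcm hqcm

lemma mem_hookSeed {r1 r2 : ℕ} {C : Finset ℕ} {hC : C.Nonempty} {p : ℕ × ℕ} :
    p ∈ hookSeed r1 r2 C hC ↔
      (p.1 = r2 ∧ p.2 ∈ C) ∨ (r1 ≤ p.1 ∧ p.1 ≤ r2 ∧ p.2 = C.max' hC) := by
  obtain ⟨a, b⟩ := p
  simp only [hookSeed, Finset.mem_union, Finset.mem_image, Finset.mem_Icc, Prod.mk.injEq]
  constructor
  · rintro (⟨c, hc, rfl, rfl⟩ | ⟨j, ⟨hj1, hj2⟩, rfl, rfl⟩)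
    · exact Or.inl ⟨rfl, hc⟩
    · exact Or.inr ⟨hj1, hj2, rfl⟩
  · rintro (⟨rfl, hb⟩ | ⟨h1, h2, rfl⟩)
    · exact Or.inl ⟨b, hb, rfl, rfl⟩
    · exact Or.inr ⟨a, ⟨h1, h2⟩, rfl, rfl⟩

lemma hookInv_hookSeed {r1 r2 : ℕ} {C : Finset ℕ} (hC : C.Nonempty)
    (h1 : 1 ≤ r1) (h12 : r1 ≤ r2) :
    HookInv (C.max' hC) (r2 - r1 + 1) C (hookSeed r1 r2 C hC) := by
  refine ⟨?_, ?_, ?_, ?_⟩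
  · intro p hp
    rcases mem_hookSeed.1 hp with ⟨hr, hcC⟩ | ⟨ha, hb, hcm⟩
    · exact ⟨hcC, by omega⟩
    · exact ⟨hcm ▸ C.max'_mem hC, by omega⟩
  · have hfe : (hookSeed r1 r2 C hC).filter (fun p => p.2 = C.max' hC)
        = (Finset.Icc r1 r2).image (fun j => (j, C.max' hC)) := by
      ext p
      simp only [Finset.mem_filter, Finset.mem_image, Finset.mem_Icc, mem_hookSeed]
      constructor
      · rintro ⟨h | h, hcm⟩
        · exact ⟨p.1, ⟨by omega, by omega⟩, Prod.ext rfl hcm.symm⟩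
        · exact ⟨p.1, ⟨h.1, h.2.1⟩, Prod.ext rfl hcm.symm⟩
      · rintro ⟨j, ⟨hj1, hj2⟩, rfl⟩
        exact ⟨Or.inr ⟨hj1, hj2, rfl⟩, rfl⟩
    rw [hfe, Finset.card_image_of_injective _ (fun a b h => by
      simpa using h), Nat.card_Icc]
    omega
  · intro d hd hne
    have hfe : (hookSeed r1 r2 C hC).filter (fun p => p.2 = d) = {(r2, d)} := by
      ext p
      simp only [Finset.mem_filter, Finset.mem_singleton, mem_hookSeed]
      constructor
      · rintro ⟨h | h, hcd⟩
        · exact Prod.ext h.1 hcd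
        · exact absurd (hcd.symm.trans h.2.2) hne
      · rintro rfl
        exact ⟨Or.inl ⟨rfl, hd⟩, rfl⟩
    rw [hfe, Finset.card_singleton]
  · intro p hp q hq hpcm hqcm
    have hp1 : p.1 ≤ r2 := by
      rcases mem_hookSeed.1 hp with ⟨h, _⟩ | ⟨_, h, _⟩ <;> omega
    rcases mem_hookSeed.1 hq with ⟨hq1, _⟩ | ⟨_, _, hq2⟩
    · omega
    · exact absurd hq2 hqcm


set_option maxHeartbeats 1000000 in
lemma hook_move_or_eq {s : ℕ} {C : Finset ℕ} (hC : C.Nonempty) (hs : 1 ≤ s)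
    {T : Diagram} (hI : HookInv (C.max' hC) s C T) :
    T = hookSeed 1 s C hC ∨ ∃ T', KMove T T' := by
  obtain ⟨hcol, hcm, hone, hbelow⟩ := hI
  set cm := C.max' hC with hcmdef
  set Rr : Finset ℕ := (T.filter fun p => p.2 = cm).image Prod.fst with hRrdef
  have hmemR : ∀ j, j ∈ Rr ↔ (j, cm) ∈ T := by
    intro j
    simp only [hRrdef, Finset.mem_image, Finset.mem_filter]
    constructor
    · rintro ⟨p, ⟨hp, hp2⟩, rfl⟩
      have hpe : p = (p.1, cm) := Prod.ext rfl hp2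
      rwa [hpe] at hp
    · intro h; exact ⟨(j, cm), ⟨h, rfl⟩, rfl⟩
  have hcardR : Rr.card = s := by
    rw [hRrdef, Finset.card_image_of_injOn, hcm]
    intro p hp q hq h
    simp only [Finset.coe_filter, Set.mem_setOf_eq] at hp hq
    exact Prod.ext h (hp.2.trans hq.2.symm)
  have hRne : Rr.Nonempty := Finset.card_pos.1 (by omega)
  set mx := Rr.max' hRne with hmxdef
  by_cases hms : s < mx
  · right
    set G : Finset ℕ := (Finset.Icc 1 (mx - 1)).filter (fun j => j ∉ Rr) with hGdef
    have hGne : G.Nonempty := by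
      by_contra hGe
      rw [Finset.not_nonempty_iff_eq_empty] at hGe
      have hsub : insert mx (Finset.Icc 1 (mx - 1)) ⊆ Rr := by
        intro j hj
        rcases Finset.mem_insert.1 hj with rfl | hj
        · exact Rr.max'_mem hRne
        · by_contra hjR
          have hjG : j ∈ G := Finset.mem_filter.2 ⟨hj, hjR⟩
          rw [hGe] at hjG
          exact absurd hjG (Finset.notMem_empty j)
      have h1 := Finset.card_le_card hsub
      rw [Finset.card_insert_of_notMem (by
        simp only [Finset.mem_Icc]; omega), Nat.card_Icc, hcardR] at h1
      omega
    set g := G.max' hGne with hgdef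
    have hgG : g ∈ G := G.max'_mem hGne
    rw [hGdef, Finset.mem_filter, Finset.mem_Icc] at hgG
    refine ⟨_, ⟨mx, cm, g, hgG.1.1, by omega, (hmemR mx).1 (Rr.max'_mem hRne), ?_, ?_, ?_, rfl⟩⟩
    · intro c' hc' hmemc'
      exact absurd (C.le_max' c' (hcol _ hmemc').1) (not_le.2 hc')
    · intro hmem'
      exact hgG.2 ((hmemR g).2 hmem')
    · intro j hj1 hj2
      by_contra hjT
      have hjR : j ∉ Rr := fun h => hjT ((hmemR j).1 h)
      have hjG : j ∈ G := Finset.mem_filter.2 ⟨Finset.mem_Icc.2 ⟨by omega, by omega⟩, hjR⟩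
      have := G.le_max' j hjG
      omega
  · push_neg at hms
    have hsub : Rr ⊆ Finset.Icc 1 mx := by
      intro j hj
      exact Finset.mem_Icc.2 ⟨(hcol _ ((hmemR j).1 hj)).2, Rr.le_max' j hj⟩
    have hmxs : mx = s := by
      have h2 := Finset.card_le_card hsub
      rw [hcardR, Nat.card_Icc] at h2
      omega
    have hReq : Rr = Finset.Icc 1 s := by
      rw [← hmxs]
      exact Finset.eq_of_subset_of_card_le hsub (by rw [hcardR, Nat.card_Icc]; omega)
    have hsT : (s, cm) ∈ T :=
      (hmemR s).1 (by rw [hReq]; exact Finset.mem_Icc.2 ⟨hs, le_refl s⟩)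
    by_cases hall : ∀ q ∈ T, q.2 ≠ cm → q.1 = s
    · left
      ext p
      rw [mem_hookSeed]
      constructor
      · intro hp
        obtain ⟨hpC, hp1⟩ := hcol p hp
        by_cases hpcm : p.2 = cm
        · have hpe : p = (p.1, cm) := Prod.ext rfl hpcm
          rw [hpe] at hp
          have hmem2 : p.1 ∈ Rr := (hmemR p.1).2 hp
          rw [hReq, Finset.mem_Icc] at hmem2
          exact Or.inr ⟨hmem2.1, hmem2.2, hpcm⟩
        · exact Or.inl ⟨hall p hp hpcm, hpC⟩
      · rintro (⟨hp1, hpC⟩ | ⟨hp1, hp2, hpcm⟩)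
        · by_cases hpcm : p.2 = cm
          · have hpe : p = (s, cm) := Prod.ext hp1 hpcm
            rwa [hpe]
          · obtain ⟨e, he⟩ := Finset.card_eq_one.1 (hone p.2 hpC hpcm)
            have heT : e ∈ T.filter (fun q => q.2 = p.2) := by
              rw [he]; exact Finset.mem_singleton_self e
            rw [Finset.mem_filter] at heT
            have he1 : e.1 = s := hall e heT.1 (by rw [heT.2]; exact hpcm)
            have hpe : p = e := Prod.ext (hp1.trans he1.symm) heT.2.symm
            rw [hpe]; exact heT.1
        · have hmem2 : p.1 ∈ Rr := by rw [hReq]; exact Finset.mem_Icc.2 ⟨hp1, hp2⟩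
          have hT2 := (hmemR p.1).1 hmem2
          have hpe : p = (p.1, cm) := Prod.ext rfl hpcm
          rw [hpe]; exact hT2
    · right
      push_neg at hall
      obtain ⟨q, hqT, hqcm, hqs⟩ := hall
      have hqgt : s < q.1 :=
        lt_of_le_of_ne (hbelow (s, cm) hsT q hqT rfl hqcm) (fun h => hqs h.symm)
      set N : Finset (ℕ × ℕ) := T.filter (fun p => p.2 ≠ cm) with hNdef
      have hqN : q ∈ N := Finset.mem_filter.2 ⟨hqT, hqcm⟩
      set Nr := N.image Prod.fst with hNrdef
      have hNrne : Nr.Nonempty := ⟨q.1, Finset.mem_image_of_mem _ hqN⟩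
      set r := Nr.max' hNrne with hrdef
      have hrq : q.1 ≤ r := Nr.le_max' _ (Finset.mem_image_of_mem _ hqN)
      have hrs : s < r := lt_of_lt_of_le hqgt hrq
      set M := N.filter (fun p => p.1 = r) with hMdef
      have hMne : M.Nonempty := by
        obtain ⟨p, hpN, hp1⟩ := Finset.mem_image.1 (Nr.max'_mem hNrne)
        exact ⟨p, Finset.mem_filter.2 ⟨hpN, hp1⟩⟩
      set Mc := M.image Prod.snd with hMcdef
      have hMcne : Mc.Nonempty := hMne.image _
      set cs := Mc.max' hMcne with hcsdef
      clear_value r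
      obtain ⟨e, heM, hecs⟩ := Finset.mem_image.1 (Mc.max'_mem hMcne)
      rw [← hcsdef] at hecs
      clear_value cs
      rw [hMdef, Finset.mem_filter, hNdef, Finset.mem_filter] at heM
      have heT : (r, cs) ∈ T := by
        have hee : e = (r, cs) := Prod.ext heM.2 hecs
        rw [← hee]; exact heM.1.1
      have hcsne : cs ≠ cm := by rw [← hecs]; exact heM.1.2
      refine ⟨_, ⟨r, cs, r - 1, by omega, by omega, heT, ?_, ?_, ?_, rfl⟩⟩
      · intro c' hc' hmemc'
        by_cases hccm : c' = cm
        · subst hccm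
          have hmem2 : r ∈ Rr := (hmemR r).2 hmemc'
          rw [hReq, Finset.mem_Icc] at hmem2
          omega
        · have hMm : (r, c') ∈ M := by
            rw [hMdef]
            exact Finset.mem_filter.2 ⟨Finset.mem_filter.2 ⟨hmemc', hccm⟩, rfl⟩
          have hc'M : c' ∈ Mc := by
            rw [hMcdef]
            exact Finset.mem_image_of_mem _ hMm
          have := Mc.le_max' c' hc'M
          omega
      · intro hmem'
        obtain ⟨e', he'⟩ := Finset.card_eq_one.1 (hone cs (hcol _ heT).1 hcsne)
        have h1 : (r, cs) ∈ T.filter (fun p => p.2 = cs) := Finset.mem_filter.2 ⟨heT, rfl⟩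
        have h2 : (r - 1, cs) ∈ T.filter (fun p => p.2 = cs) := Finset.mem_filter.2 ⟨hmem', rfl⟩
        rw [he', Finset.mem_singleton] at h1 h2
        have h3 := h1.trans h2.symm
        simp only [Prod.mk.injEq] at h3
        omega
      · intro j hj1 hj2
        omega

lemma hookInv_reach {cm s : ℕ} {C : Finset ℕ} (hmax : ∀ c ∈ C, c ≤ cm)
    {T T' : Diagram} (h : KReach T T') (hI : HookInv cm s C T) : HookInv cm s C T' := by
  induction h with
  | refl => exact hI
  | tail _ hmv ih => exact hookInv_move hmax ih hmv

lemma reach_bottom {s : ℕ} {C : Finset ℕ} (hC : C.Nonempty) (hs : 1 ≤ s) :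
    ∀ n (T : Diagram), wt T < n → HookInv (C.max' hC) s C T →
      KReach T (hookSeed 1 s C hC) := by
  intro n
  induction n with
  | zero => intro T h _; exact absurd h (Nat.not_lt_zero _)
  | succ n ih =>
    intro T hw hI
    rcases hook_move_or_eq hC hs hI with rfl | ⟨T', hm⟩
    · exact Relation.ReflTransGen.refl
    · have hI' := hookInv_move (fun c hc => C.le_max' c hc) hI hm
      have hlt := wt_lt_of_KMove hm
      exact Relation.ReflTransGen.head hm (ih T' (by omega) hI')

lemma key_reach_bottom (r1 r2 : ℕ) (C : Finset ℕ) (hC : C.Nonempty)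
    (h1 : 1 ≤ r1) (h12 : r1 ≤ r2) :
    ∀ T, KReach (hookSeed r1 r2 C hC) T → KReach T (hookSeed 1 (r2 - r1 + 1) C hC) := by
  intro T hT
  have hs : 1 ≤ r2 - r1 + 1 := by omega
  have hI0 := hookInv_hookSeed hC h1 h12
  have hI := hookInv_reach (fun c hc => C.le_max' c hc) hT hI0
  exact reach_bottom hC hs (wt T + 1) T (by omega) hI

/-- The Kohnert poset of a hook diagram is bounded; in particular, for `D = H(r₁,r₂;C)` the
unique minimal element of `P(D)` is `H(1, r₂−r₁+1; C)`. -/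
theorem stmt_8 :
    (∀ D : Diagram, IsHookDiagram D → Bounded KLe (KD D)) ∧
    (∀ (r1 r2 : ℕ) (C : Finset ℕ) (hC : C.Nonempty),
      1 ≤ r1 → r1 ≤ r2 → (∀ c ∈ C, 1 ≤ c) →
      hookSeed 1 (r2 - r1 + 1) C hC ∈ KD (hookSeed r1 r2 C hC) ∧
        ∀ T ∈ KD (hookSeed r1 r2 C hC), KReach T (hookSeed 1 (r2 - r1 + 1) C hC)) := by
  constructor
  · rintro D ⟨r1, r2, C, hC, h1, h12, hCpos, hreach⟩
    refine ⟨⟨hookSeed 1 (r2 - r1 + 1) C hC, ?_, ?_⟩,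
      ⟨D, Relation.ReflTransGen.refl, fun x hx => hx⟩⟩
    · exact key_reach_bottom r1 r2 C hC h1 h12 D hreach
    · intro x hx
      exact key_reach_bottom r1 r2 C hC h1 h12 x (Relation.ReflTransGen.trans hreach hx)
  · intro r1 r2 C hC h1 h12 hCpos
    exact ⟨key_reach_bottom r1 r2 C hC h1 h12 _ Relation.ReflTransGen.refl,
      fun T hT => key_reach_bottom r1 r2 C hC h1 h12 T hT⟩

end KohnertPaper
end

section
/- If D is a hook diagram and D' = D↓^{(r,c)}_{(r−k,c)} is obtained from D by a single Kohnert move at row r that moves a cell down k rows, and D' is covered by D in the Kohnert poset, then k = 1. -/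
namespace KohnertPaper

variable {α : Type*}

/-- Number of cells of `T` in column `c`. -/
def colCount (T : Diagram) (c : ℕ) : ℕ := (T.filter fun p => p.2 = c).card

lemma kmove_colCount {D D' : Diagram} (h : KMove D D') (c : ℕ) :
    colCount D' c = colCount D c := by
  obtain ⟨r, cc, r', h1, h2, hmem, hrt, hnot, hfil, hEq⟩ := h
  subst hEq
  unfold colCount
  rw [Finset.filter_insert, Finset.filter_erase]
  by_cases hc : cc = c
  · subst hc
    rw [if_pos rfl]
    rw [Finset.card_insert_of_notMem, Finset.card_erase_of_mem]
    · have : 1 ≤ (D.filter fun p : ℕ × ℕ => p.2 = cc).card :=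
        Finset.card_pos.mpr ⟨(r, cc), Finset.mem_filter.mpr ⟨hmem, rfl⟩⟩
      omega
    · exact Finset.mem_filter.mpr ⟨hmem, rfl⟩
    · intro hmem'
      exact hnot (Finset.mem_filter.mp (Finset.mem_erase.mp hmem').2).1
  · rw [if_neg hc, Finset.erase_eq_of_notMem]
    intro hmem'
    exact hc (Finset.mem_filter.mp hmem').2

lemma kreach_colCount {S D : Diagram} (h : KReach S D) (c : ℕ) :
    colCount D c = colCount S c := by
  induction h with
  | refl => rfl
  | tail _ hmv ih => rw [kmove_colCount hmv, ih]

/-- In a hook diagram, if some column contains two cells, then no cell lies in a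
strictly larger column. -/
lemma hook_two_cells {D : Diagram} (hD : IsHookDiagram D) {a b c ρ c' : ℕ}
    (ha : (a, c) ∈ D) (hb : (b, c) ∈ D) (hab : a ≠ b) (hρ : (ρ, c') ∈ D) :
    c' ≤ c := by
  obtain ⟨r1, r2, C, hC, _, _, _, hreach⟩ := hD
  set m := C.max' hC with hm
  -- column c has at least two cells in the seed
  have h2 : 2 ≤ colCount (hookSeed r1 r2 C hC) c := by
    rw [← kreach_colCount hreach]
    have : ({(a, c), (b, c)} : Finset (ℕ × ℕ)) ⊆
        D.filter fun p => p.2 = c := by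
      intro p hp
      rcases Finset.mem_insert.mp hp with rfl | hp
      · exact Finset.mem_filter.mpr ⟨ha, rfl⟩
      · rw [Finset.mem_singleton] at hp; subst hp
        exact Finset.mem_filter.mpr ⟨hb, rfl⟩
    calc 2 = ({(a, c), (b, c)} : Finset (ℕ × ℕ)).card := by
              rw [Finset.card_insert_of_notMem (by simp [hab]), Finset.card_singleton]
         _ ≤ _ := Finset.card_le_card this
  -- hence c = m
  have hcm : c = m := by
    by_contra hcm
    have hsub : (hookSeed r1 r2 C hC).filter (fun p => p.2 = c) ⊆ {(r2, c)} := by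
      intro p hp
      obtain ⟨hp1, hp2⟩ := Finset.mem_filter.mp hp
      rcases mem_hookSeed.mp hp1 with ⟨h1, h2⟩ | ⟨h1, h2, h3⟩
      · simp only [Finset.mem_singleton]
        exact Prod.ext h1 hp2
      · exact absurd (hp2 ▸ h3) hcm
    have := Finset.card_le_card hsub
    simp only [Finset.card_singleton] at this
    unfold colCount at h2
    omega
  -- column c' is nonempty, hence c' ≤ m
  have h1 : 1 ≤ colCount (hookSeed r1 r2 C hC) c' := by
    rw [← kreach_colCount hreach]
    exact Finset.card_pos.mpr ⟨(ρ, c'), Finset.mem_filter.mpr ⟨hρ, rfl⟩⟩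
  obtain ⟨p, hp⟩ := Finset.card_pos.mp h1
  obtain ⟨hp1, hp2⟩ := Finset.mem_filter.mp hp
  rcases mem_hookSeed.mp hp1 with ⟨_, h2⟩ | ⟨_, _, h3⟩
  · exact hcm ▸ hp2 ▸ C.le_max' _ h2
  · rw [hcm, ← hp2, h3]

/-- If `D` is a hook diagram and `D' = D ↓^{(r,c)}_{(r−k,c)}` is obtained from `D` by a
single Kohnert move moving a cell down `k` rows, and `D'` is covered by `D` in the Kohnert
poset, then `k = 1`. -/
theorem stmt_9 (D : Diagram) (hD : IsHookDiagram D)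
    (r c k : ℕ) (hk : 1 ≤ k) (hkr : k < r)
    (hcell : (r, c) ∈ D) (hright : ∀ c', c < c' → (r, c') ∉ D)
    (hempty : (r - k, c) ∉ D)
    (hfill : ∀ r₁, r - k < r₁ → r₁ < r → (r₁, c) ∈ D)
    (D' : Diagram) (hD' : D' = insert (r - k, c) (D.erase (r, c)))
    (hcov : ∀ T : Diagram, KReach D T → KReach T D' → T = D ∨ T = D') :
    k = 1 := by
  by_contra hk1
  have hk2 : 2 ≤ k := by omega
  -- column c of D has two cells: (r,c) and (r-1,c)
  have hrm1 : (r - 1, c) ∈ D := hfill (r - 1) (by omega) (by omega)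
  have hmax : ∀ ρ c', (ρ, c') ∈ D → c' ≤ c :=
    fun ρ c' h => hook_two_cells hD hcell hrm1 (by omega) h
  -- the intermediate diagram
  set T : Diagram := insert (r - k, c) (D.erase (r - k + 1, c)) with hT
  have hmemT : (r - k + 1, c) ∈ D := hfill _ (by omega) (by omega)
  have hmv1 : KMove D T := by
    refine ⟨r - k + 1, c, r - k, by omega, by omega, hmemT, ?_, hempty, ?_, rfl⟩
    · intro c' hc' hmem'
      exact absurd (hmax _ _ hmem') (by omega)
    · intro r₁ h1 h2; omega
  have hrcT : (r, c) ∈ T :=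
    Finset.mem_insert_of_mem (Finset.mem_erase.mpr ⟨by simp; omega, hcell⟩)
  have hmv2 : KMove T D' := by
    refine ⟨r, c, r - k + 1, by omega, by omega, hrcT, ?_, ?_, ?_, ?_⟩
    · intro c' hc' hmem'
      rcases Finset.mem_insert.mp hmem' with h | h
      · have : c' = c := (Prod.mk.injEq _ _ _ _ ▸ h).2
        omega
      · exact hright c' hc' (Finset.mem_of_mem_erase h)
    · intro hmem'
      rcases Finset.mem_insert.mp hmem' with h | h
      · have : r - k + 1 = r - k := (Prod.mk.injEq _ _ _ _ ▸ h).1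
        omega
      · exact (Finset.mem_erase.mp h).1 rfl
    · intro r₁ h1 h2
      exact Finset.mem_insert_of_mem
        (Finset.mem_erase.mpr ⟨by simp; omega, hfill r₁ (by omega) h2⟩)
    · rw [hD', hT]
      ext ⟨x, y⟩
      simp only [Finset.mem_insert, Finset.mem_erase, Prod.mk.injEq, ne_eq, not_and]
      constructor
      · rintro (⟨rfl, rfl⟩ | ⟨hne, hmem'⟩)
        · exact Or.inr ⟨fun h _ => by omega, Or.inl ⟨rfl, rfl⟩⟩
        · by_cases hxy : x = r - k + 1 ∧ y = c
          · exact Or.inl ⟨hxy.1, hxy.2⟩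
          · refine Or.inr ⟨fun h1 h2 => absurd (hne h1) (fun h => h h2),
              Or.inr ⟨fun h1 h2 => hxy ⟨h1, h2⟩, hmem'⟩⟩
      · rintro (⟨rfl, rfl⟩ | ⟨hne, (⟨rfl, rfl⟩ | ⟨_, hmem'⟩)⟩)
        · exact Or.inr ⟨fun h => by omega, hmemT⟩
        · exact Or.inl ⟨rfl, rfl⟩
        · exact Or.inr ⟨fun h1 h2 => absurd h2 (hne h1), hmem'⟩
  rcases hcov T (Relation.ReflTransGen.single hmv1)
      (Relation.ReflTransGen.single hmv2) with h | h
  · exact hempty (h ▸ Finset.mem_insert_self _ _)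
  · rw [h, hD'] at hrcT
    rcases Finset.mem_insert.mp hrcT with h' | h'
    · have : r = r - k := (Prod.mk.injEq _ _ _ _ ▸ h').1
      omega
    · exact (Finset.mem_erase.mp h').1 rfl


end KohnertPaper
end

section
/- Let D be a diagram all of whose nonempty columns contain exactly one cell. Then the Kohnert posets P(D) and P(D \ {(1,c̃) : c̃ > 0}) are isomorphic; i.e., deleting all cells in row 1 does not change the Kohnert poset up to isomorphism. -/
namespace KohnertPaper

variable {α : Type*}

/-- Auxiliary map: delete from `T` every cell lying in a column that contains a row-1 cell
of `D`. -/
def fmap (D T : Diagram) : Diagram := T.filter (fun p => (1, p.2) ∉ D)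

/-- Invariant preserved by Kohnert moves starting from a one-cell-per-column diagram `D`:
each column of `T` has at most one cell, and the row-1 cells of `D` stay in `T`. -/
def Inv (D T : Diagram) : Prop :=
  (∀ c r r', (r, c) ∈ T → (r', c) ∈ T → r = r') ∧ (∀ c, (1, c) ∈ D → (1, c) ∈ T)

lemma mem_fmap {D T : Diagram} {p : ℕ × ℕ} :
    p ∈ fmap D T ↔ p ∈ T ∧ (1, p.2) ∉ D := Finset.mem_filter

lemma kmove_step {D T T' : Diagram} (hI : Inv D T) (h : KMove T T') :
    Inv D T' ∧ KMove (fmap D T) (fmap D T') := by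
  obtain ⟨r, c, r', h1, h2, hmem, hright, hempty, hbetween, hT'⟩ := h
  have h1c : (1, c) ∉ D := by
    intro hc
    have := hI.1 c r 1 hmem (hI.2 c hc)
    omega
  constructor
  · subst hT'
    have mem_iff : ∀ q : ℕ × ℕ, q ∈ insert (r', c) (T.erase (r, c)) ↔
        q = (r', c) ∨ (q ∈ T ∧ q ≠ (r, c)) := by
      intro q; simp [Finset.mem_insert, Finset.mem_erase, and_comm]
    constructor
    · intro c₁ s s' hs hs'
      rw [mem_iff] at hs hs'
      have key : ∀ t : ℕ, ((t, c₁) ∈ T ∧ (t, c₁) ≠ (r, c)) → c₁ ≠ c := by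
        rintro t ⟨ht, hne⟩ rfl
        exact hne (by rw [hI.1 c₁ t r ht hmem])
      rcases hs with h | h <;> rcases hs' with h' | h'
      · rw [Prod.mk.injEq] at h h'; omega
      · exact absurd (Prod.mk.injEq .. ▸ h).2 (key _ h')
      · exact absurd (Prod.mk.injEq .. ▸ h').2 (key _ h)
      · exact hI.1 c₁ s s' h.1 h'.1
    · intro c₁ hc₁
      have hT1 := hI.2 c₁ hc₁
      rw [mem_iff]
      right
      refine ⟨hT1, fun he => ?_⟩
      rw [Prod.mk.injEq] at he
      exact h1c (he.2 ▸ hc₁)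
  · refine ⟨r, c, r', h1, h2, mem_fmap.mpr ⟨hmem, h1c⟩, ?_, ?_, ?_, ?_⟩
    · intro c' hc' hin; exact hright c' hc' (mem_fmap.mp hin).1
    · intro hin; exact hempty (mem_fmap.mp hin).1
    · intro r₁ ha hb; exact mem_fmap.mpr ⟨hbetween r₁ ha hb, h1c⟩
    · subst hT'
      unfold fmap
      rw [Finset.filter_insert, if_pos h1c, Finset.filter_erase]

lemma kmove_lift {D T S' : Diagram} (hI : Inv D T) (h : KMove (fmap D T) S') :
    ∃ T', KMove T T' ∧ fmap D T' = S' := by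
  obtain ⟨r, c, r', h1, h2, hmem, hright, hempty, hbetween, hS'⟩ := h
  have hmemT : (r, c) ∈ T := (mem_fmap.mp hmem).1
  have h1c : (1, c) ∉ D := (mem_fmap.mp hmem).2
  refine ⟨insert (r', c) (T.erase (r, c)),
    ⟨r, c, r', h1, h2, hmemT, ?_, ?_, ?_, rfl⟩, ?_⟩
  · intro c' hc' hin
    by_cases h1c' : (1, c') ∈ D
    · have := hI.1 c' r 1 hin (hI.2 c' h1c')
      omega
    · exact hright c' hc' (mem_fmap.mpr ⟨hin, h1c'⟩)
  · intro hin; exact hempty (mem_fmap.mpr ⟨hin, h1c⟩)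
  · intro r₁ ha hb; exact (mem_fmap.mp (hbetween r₁ ha hb)).1
  · rw [hS']
    unfold fmap
    rw [Finset.filter_insert, if_pos h1c, Finset.filter_erase]

lemma reach_f {D T T₂ : Diagram} (hI : Inv D T) (h : KReach T T₂) :
    Inv D T₂ ∧ KReach (fmap D T) (fmap D T₂) := by
  induction h with
  | refl => exact ⟨hI, Relation.ReflTransGen.refl⟩
  | tail _ hmv ih =>
      obtain ⟨hI', hr⟩ := ih
      obtain ⟨hI2, hm⟩ := kmove_step hI' hmv
      exact ⟨hI2, hr.tail hm⟩

lemma reach_lift {D T S : Diagram} (hI : Inv D T) (h : KReach (fmap D T) S) :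
    ∃ T₂, KReach T T₂ ∧ fmap D T₂ = S := by
  induction h with
  | refl => exact ⟨T, Relation.ReflTransGen.refl, rfl⟩
  | tail _ hmv ih =>
      obtain ⟨T₂, hr, rfl⟩ := ih
      have hI₂ := (reach_f hI hr).1
      obtain ⟨T₃, hm, hf⟩ := kmove_lift hI₂ hmv
      exact ⟨T₃, hr.tail hm, hf⟩

lemma recover {D T : Diagram} (hI : Inv D T) :
    T = fmap D T ∪ D.filter (fun p => p.1 = 1) := by
  ext ⟨a, b⟩
  simp only [Finset.mem_union, mem_fmap, Finset.mem_filter]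
  constructor
  · intro h
    by_cases hc : (1, b) ∈ D
    · right
      have ha : a = 1 := hI.1 b a 1 h (hI.2 b hc)
      subst ha
      exact ⟨hc, rfl⟩
    · exact Or.inl ⟨h, hc⟩
  · rintro (⟨h, _⟩ | ⟨h, h1⟩)
    · exact h
    · obtain rfl : a = 1 := h1
      exact hI.2 b h

/-- If every nonempty column of `D` contains exactly one cell, then `P(D)` is isomorphic to
`P(D \ row 1)`. -/
theorem stmt_11 (D : Diagram) (hD : ∀ p ∈ D, 1 ≤ p.1 ∧ 1 ≤ p.2)
    (hcol : ∀ c r r', (r, c) ∈ D → (r', c) ∈ D → r = r') :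
    ∃ f : Diagram → Diagram,
      (∀ T, KReach D T → KReach (D.filter fun p => p.1 ≠ 1) (f T)) ∧
      (∀ T1 T2, KReach D T1 → KReach D T2 → f T1 = f T2 → T1 = T2) ∧
      (∀ S, KReach (D.filter fun p => p.1 ≠ 1) S → ∃ T, KReach D T ∧ f T = S) ∧
      (∀ T1 T2, KReach D T1 → KReach D T2 →
        (KReach T1 T2 ↔ KReach (f T1) (f T2))) := by
  have hInvD : Inv D D := ⟨hcol, fun c hc => hc⟩
  have hfD : fmap D D = D.filter fun p => p.1 ≠ 1 := by
    ext ⟨a, b⟩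
    simp only [mem_fmap, Finset.mem_filter]
    constructor
    · rintro ⟨h, h1⟩
      refine ⟨h, fun ha => h1 ?_⟩
      obtain rfl : a = 1 := ha
      exact h
    · rintro ⟨h, h1⟩
      exact ⟨h, fun hc => h1 (hcol b a 1 h hc)⟩
  refine ⟨fmap D, ?_, ?_, ?_, ?_⟩
  · intro T hT
    rw [← hfD]
    exact (reach_f hInvD hT).2
  · intro T1 T2 h1 h2 hf
    have i1 := (reach_f hInvD h1).1
    have i2 := (reach_f hInvD h2).1
    rw [recover i1, recover i2, hf]
  · intro S hS
    rw [← hfD] at hS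
    exact reach_lift hInvD hS
  · intro T1 T2 h1 h2
    have i1 := (reach_f hInvD h1).1
    have i2 := (reach_f hInvD h2).1
    constructor
    · intro h; exact (reach_f i1 h).2
    · intro h
      obtain ⟨T', hr, hf⟩ := reach_lift i1 h
      have i' := (reach_f i1 hr).1
      have : T' = T2 := by rw [recover i', recover i2, hf]
      exact this ▸ hr

end KohnertPaper
end

section
/- Let a = (a_1,…,a_n) be a weak composition with i < j indices such that a_i < a_j. Then the key diagram 𝔻(a s_{i,j}), where a s_{i,j} is obtained from a by swapping entries a_i and a_j, belongs to the Kohnert poset P(𝔻(a)); i.e., 𝔻(a s_{i,j}) is reachable from 𝔻(a) by a sequence of Kohnert moves. -/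
namespace KohnertPaper

variable {α : Type*}

section Aux

lemma mem_keyDiagram (n : ℕ) (f : ℕ → ℕ) (r x : ℕ) :
    (r, x) ∈ keyDiagram n f ↔ 1 ≤ r ∧ r ≤ n ∧ 1 ≤ x ∧ x ≤ f r := by
  simp only [keyDiagram, Finset.mem_biUnion, Finset.mem_image, Finset.mem_Icc, Prod.mk.injEq]
  constructor
  · rintro ⟨r', ⟨h1, h2⟩, x', ⟨h3, h4⟩, rfl, rfl⟩
    exact ⟨h1, h2, h3, h4⟩
  · rintro ⟨h1, h2, h3, h4⟩
    exact ⟨r, ⟨h1, h2⟩, x, ⟨h3, h4⟩, rfl, rfl⟩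

/-- The composition `a` with row `j` truncated to `a j - t`. -/
def btA (a : ℕ → ℕ) (i j t : ℕ) : ℕ → ℕ :=
  fun r => if r = i then a i else if r = j then a j - t else a r

/-- The key diagram of `a` with the top `t` cells of row `j` moved to row `i`. -/
def baseD (n : ℕ) (a : ℕ → ℕ) (i j t : ℕ) : Diagram :=
  keyDiagram n (btA a i j t) ∪ (Finset.Ioc (a j - t) (a j)).image fun x => (i, x)

lemma mem_baseD (n : ℕ) (a : ℕ → ℕ) (i j : ℕ) (hi : 1 ≤ i) (hij : i < j) (hj : j ≤ n)
    (t r x : ℕ) :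
    (r, x) ∈ baseD n a i j t ↔ 1 ≤ x ∧
      ((r = i ∧ (x ≤ a i ∨ (a j - t < x ∧ x ≤ a j))) ∨
       (r = j ∧ x ≤ a j - t) ∨
       (r ≠ i ∧ r ≠ j ∧ 1 ≤ r ∧ r ≤ n ∧ x ≤ a r)) := by
  have : (r, x) ∈ baseD n a i j t ↔
      (1 ≤ r ∧ r ≤ n ∧ 1 ≤ x ∧ x ≤ btA a i j t r) ∨ (r = i ∧ a j - t < x ∧ x ≤ a j) := by
    simp only [baseD, Finset.mem_union, mem_keyDiagram, Finset.mem_image, Finset.mem_Ioc,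
      Prod.mk.injEq]
    constructor
    · rintro (h | ⟨x', ⟨h1, h2⟩, rfl, rfl⟩)
      · exact Or.inl h
      · exact Or.inr ⟨rfl, h1, h2⟩
    · rintro (h | ⟨rfl, h1, h2⟩)
      · exact Or.inl h
      · exact Or.inr ⟨x, ⟨h1, h2⟩, rfl, rfl⟩
  rw [this]
  unfold btA
  split_ifs with h1 h2 <;> omega

/-- The diagram `baseD t` with the cell `(j, a j - t)` moved to row `p` (same column). -/
def midD (n : ℕ) (a : ℕ → ℕ) (i j t p : ℕ) : Diagram :=
  insert (p, a j - t) ((baseD n a i j t).erase (j, a j - t))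

lemma mem_midD (n : ℕ) (a : ℕ → ℕ) (i j t p r x : ℕ) :
    (r, x) ∈ midD n a i j t p ↔
      (r = p ∧ x = a j - t) ∨ (¬(r = j ∧ x = a j - t) ∧ (r, x) ∈ baseD n a i j t) := by
  simp only [midD, Finset.mem_insert, Finset.mem_erase, Prod.mk.injEq, ne_eq]

lemma cascade (n : ℕ) (a : ℕ → ℕ) (i j : ℕ) (hi : 1 ≤ i) (hij : i < j) (hj : j ≤ n)
    (t : ℕ) (ht : a i < a j - t) :
    ∀ p, i ≤ p → p ≤ j → (p = i ∨ p = j ∨ a p < a j - t) →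
      KReach (midD n a i j t p) (midD n a i j t i) := by
  intro p
  induction p using Nat.strong_induction_on with
  | _ p IH =>
    intro hip hpj hcond
    by_cases hpi : p = i
    · subst hpi; exact Relation.ReflTransGen.refl
    have hpi' : i < p := lt_of_le_of_ne hip fun h => hpi h.symm
    have hiF : i ∈ (Finset.Ico i p).filter fun r => r = i ∨ a r < a j - t := by
      simp [Finset.mem_Ico, hpi']
    set F := (Finset.Ico i p).filter (fun r => r = i ∨ a r < a j - t) with hF
    have hFne : F.Nonempty := ⟨i, hiF⟩
    set p' := F.max' hFne with hp'def
    have hp'F : p' ∈ F := F.max'_mem hFne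
    have hp'Ico : i ≤ p' ∧ p' < p := Finset.mem_Ico.mp (Finset.mem_filter.mp hp'F).1
    have hp'cond : p' = i ∨ a p' < a j - t := (Finset.mem_filter.mp hp'F).2
    have hmax : ∀ r, i ≤ r → r < p → (r = i ∨ a r < a j - t) → r ≤ p' := fun r h1 h2 h3 =>
      F.le_max' r (Finset.mem_filter.mpr ⟨Finset.mem_Ico.mpr ⟨h1, h2⟩, h3⟩)
    have hS : (midD n a i j t p).erase (p, a j - t) = (baseD n a i j t).erase (j, a j - t) := by
      unfold midD
      apply Finset.erase_insert
      rw [Finset.mem_erase, mem_baseD n a i j hi hij hj]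
      simp only [ne_eq, Prod.mk.injEq, and_true]
      omega
    have hmove : KMove (midD n a i j t p) (midD n a i j t p') := by
      refine ⟨p, a j - t, p', le_trans hi hp'Ico.1, hp'Ico.2, ?_, ?_, ?_, ?_, ?_⟩
      · rw [mem_midD]; exact Or.inl ⟨rfl, rfl⟩
      · intro c' hcc'
        rw [mem_midD, mem_baseD n a i j hi hij hj]
        omega
      · rw [mem_midD, mem_baseD n a i j hi hij hj]
        have := hp'Ico
        omega
      · intro r₁ hr1 hr2
        have har : ¬ (a r₁ < a j - t) := fun h =>
          absurd (hmax r₁ (by omega) (by omega) (Or.inr h)) (by omega)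
        rw [mem_midD, mem_baseD n a i j hi hij hj]
        omega
      · rw [hS]; rfl
    exact Relation.ReflTransGen.head hmove
      (IH p' hp'Ico.2 hp'Ico.1 (by omega)
        (hp'cond.elim Or.inl fun h => Or.inr (Or.inr h)))

lemma stepReach (n : ℕ) (a : ℕ → ℕ) (i j : ℕ) (hi : 1 ≤ i) (hij : i < j) (hj : j ≤ n)
    (t : ℕ) (ht : t < a j - a i) :
    KReach (baseD n a i j t) (baseD n a i j (t + 1)) := by
  have ht' : a i < a j - t := by omega
  have h1 : midD n a i j t j = baseD n a i j t := by
    unfold midD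
    apply Finset.insert_erase
    rw [mem_baseD n a i j hi hij hj]
    omega
  have h2 : midD n a i j t i = baseD n a i j (t + 1) := by
    ext ⟨r, x⟩
    rw [mem_midD, mem_baseD n a i j hi hij hj, mem_baseD n a i j hi hij hj]
    omega
  rw [← h1, ← h2]
  exact cascade n a i j hi hij hj t ht' j (le_of_lt hij) le_rfl (Or.inr (Or.inl rfl))

lemma reachAux (n : ℕ) (a : ℕ → ℕ) (i j : ℕ) (hi : 1 ≤ i) (hij : i < j) (hj : j ≤ n) :
    ∀ t, t ≤ a j - a i → KReach (baseD n a i j 0) (baseD n a i j t) := by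
  intro t
  induction t with
  | zero => intro _; exact Relation.ReflTransGen.refl
  | succ t IHt =>
    intro h
    exact Relation.ReflTransGen.trans (IHt (by omega))
      (stepReach n a i j hi hij hj t (by omega))

end Aux

/-- If `i < j` and `aᵢ < aⱼ`, then the key diagram of `a` with entries `i` and `j` swapped is
reachable from the key diagram of `a` by Kohnert moves. -/
theorem stmt_16 (n : ℕ) (a : ℕ → ℕ) (i j : ℕ)
    (hi : 1 ≤ i) (hij : i < j) (hj : j ≤ n) (hlt : a i < a j) :
    KReach (keyDiagram n a)
      (keyDiagram n fun k => if k = i then a j else if k = j then a i else a k) := by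
  have e0 : baseD n a i j 0 = keyDiagram n a := by
    ext ⟨r, x⟩
    by_cases hri : r = i
    · rw [hri, mem_baseD n a i j hi hij hj, mem_keyDiagram]; omega
    · by_cases hrj : r = j
      · rw [hrj, mem_baseD n a i j hi hij hj, mem_keyDiagram]; omega
      · rw [mem_baseD n a i j hi hij hj, mem_keyDiagram]; omega
  have e1 : baseD n a i j (a j - a i) =
      keyDiagram n fun k => if k = i then a j else if k = j then a i else a k := by
    ext ⟨r, x⟩
    simp only [mem_baseD n a i j hi hij hj, mem_keyDiagram]
    split_ifs with h1 h2 <;> omega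
  rw [← e0, ← e1]
  exact reachAux n a i j hi hij hj _ le_rfl

end KohnertPaper
end

section
/- Let a be a pure composition with pure decomposition (α_1,…,α_m) (so the entries of a are the concatenation of the α_j, with min(α_{j−1}) ≥ max(α_j) for all j > 1). Then there is a poset isomorphism P(𝔻(a)) ≅ P(𝔻(α_1)) × ⋯ × P(𝔻(α_m)), where the product poset has the componentwise order. -/
namespace KohnertPaper

variable {α : Type*}

/-- A weak composition (given as a list) is pure. -/
def PureCompL (l : List ℕ) : Prop :=
  ¬ ∃ j1 j2 j3, j1 < j2 ∧ j2 < j3 ∧ j3 < l.length ∧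
    ((l.getD j1 0 < l.getD j2 0 ∧ l.getD j2 0 < l.getD j3 0) ∨
     (l.getD j1 0 < l.getD j3 0 ∧ l.getD j3 0 < l.getD j2 0) ∨
     (l.getD j1 0 + 1 < l.getD j2 0 ∧ l.getD j2 0 = l.getD j3 0))

/-! ### Auxiliary development for `stmt_17` -/

section Aux17

/-- Shift all rows of a diagram up by `o`. -/
def lift17 (o : ℕ) (S : Diagram) : Diagram := S.image fun p => (p.1 + o, p.2)

/-- Restrict a diagram to the rows `(o, o+len]` and shift down by `o`. -/
def unlift17 (o len : ℕ) (T : Diagram) : Diagram :=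
  (T.filter fun p => o < p.1 ∧ p.1 ≤ o + len).image fun p => (p.1 - o, p.2)

lemma mem_lift17 {o : ℕ} {S : Diagram} {q : ℕ × ℕ} :
    q ∈ lift17 o S ↔ ∃ p ∈ S, p.1 + o = q.1 ∧ p.2 = q.2 := by
  simp [lift17, Prod.ext_iff]

lemma mem_keyDiagramL {l : List ℕ} {r c : ℕ} :
    (r, c) ∈ keyDiagramL l ↔ 1 ≤ r ∧ r ≤ l.length ∧ 1 ≤ c ∧ c ≤ l.getD (r-1) 0 := by
  simp only [keyDiagramL, keyDiagram, Finset.mem_biUnion, Finset.mem_Icc, Finset.mem_image,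
    Prod.ext_iff]
  constructor
  · rintro ⟨i, ⟨hi1, hi2⟩, j, ⟨hj1, hj2⟩, rfl, rfl⟩
    exact ⟨hi1, hi2, hj1, hj2⟩
  · rintro ⟨h1, h2, h3, h4⟩
    exact ⟨r, ⟨h1, h2⟩, c, ⟨h3, h4⟩, rfl, rfl⟩

/-- Basic bounds on the cells of a diagram in the Kohnert poset of `keyDiagramL l`. -/
def Bnd17 (l : List ℕ) (T : Diagram) : Prop :=
  ∀ p ∈ T, 1 ≤ p.1 ∧ p.1 ≤ l.length ∧ 1 ≤ p.2 ∧ ∃ x ∈ l, p.2 ≤ x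

/-- Columns dominated by all entries of `l` are completely full. -/
def ColFull17 (l : List ℕ) (T : Diagram) : Prop :=
  ∀ c, 1 ≤ c → (∀ x ∈ l, c ≤ x) → ∀ r, 1 ≤ r → r ≤ l.length → (r, c) ∈ T

lemma bnd_key17 (l : List ℕ) : Bnd17 l (keyDiagramL l) := by
  rintro ⟨r, c⟩ hp
  rw [mem_keyDiagramL] at hp
  obtain ⟨h1, h2, h3, h4⟩ := hp
  refine ⟨h1, h2, h3, l.getD (r-1) 0, ?_, h4⟩
  have hlt : r - 1 < l.length := by omega
  rw [l.getD_eq_getElem 0 hlt]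
  exact List.getElem_mem hlt

lemma colfull_key17 (l : List ℕ) : ColFull17 l (keyDiagramL l) := by
  intro c hc hcle r hr1 hr2
  rw [mem_keyDiagramL]
  refine ⟨hr1, hr2, hc, ?_⟩
  have hlt : r - 1 < l.length := by omega
  rw [l.getD_eq_getElem 0 hlt]
  exact hcle _ (List.getElem_mem hlt)

lemma bnd_move17 {l : List ℕ} {T T' : Diagram} (hB : Bnd17 l T) (h : KMove T T') :
    Bnd17 l T' := by
  obtain ⟨r, c, r', h1, h2, hrc, _, _, _, rfl⟩ := h
  rintro p hp
  rcases Finset.mem_insert.mp hp with rfl | hp'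
  · obtain ⟨hh1, hh2, hh3, hh4⟩ := hB _ hrc
    exact ⟨h1, by omega, hh3, hh4⟩
  · exact hB _ (Finset.mem_of_mem_erase hp')

lemma colfull_move17 {l : List ℕ} {T T' : Diagram} (hB : Bnd17 l T) (hC : ColFull17 l T)
    (h : KMove T T') : ColFull17 l T' := by
  obtain ⟨r, c₀, r', h1, h2, hrc, hright, hr'c, hbet, rfl⟩ := h
  intro c hc hcle ρ hρ1 hρ2
  have hne : c₀ ≠ c := by
    rintro rfl
    exact hr'c (hC c₀ (by omega) hcle r' h1 (by have := (hB _ hrc).2.1; omega))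
  have : (ρ, c) ∈ T := hC c hc hcle ρ hρ1 hρ2
  apply Finset.mem_insert_of_mem
  apply Finset.mem_erase_of_ne_of_mem _ this
  simp only [ne_eq, Prod.mk.injEq, not_and]
  intro _; exact fun hcc => hne hcc.symm

lemma bnd_reach17 {l : List ℕ} {T : Diagram} (h : T ∈ KD (keyDiagramL l)) : Bnd17 l T := by
  induction h with
  | refl => exact bnd_key17 l
  | tail _ hstep ih => exact bnd_move17 ih hstep

lemma colfull_reach17 {l : List ℕ} {T : Diagram} (h : T ∈ KD (keyDiagramL l)) :
    ColFull17 l T := by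
  induction h with
  | refl => exact colfull_key17 l
  | tail hr hstep ih => exact colfull_move17 (bnd_reach17 hr) ih hstep

/-- Offset of the `i`-th block. -/
def osum17 (L : List (List ℕ)) (i : ℕ) : ℕ := ((L.take i).map List.length).sum

lemma osum17_succ {L : List (List ℕ)} {i : ℕ} (h : i < L.length) :
    osum17 L (i+1) = osum17 L i + (L.get ⟨i, h⟩).length := by
  unfold osum17
  rw [List.take_succ, List.map_append, List.sum_append]
  simp [List.getElem?_eq_getElem h]

lemma osum17_succ_le {L : List (List ℕ)} (i : ℕ) :
    osum17 L i ≤ osum17 L (i+1) := by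
  by_cases h : i < L.length
  · rw [osum17_succ h]; omega
  · unfold osum17
    rw [List.take_of_length_le (by omega), List.take_of_length_le (by omega)]

lemma osum17_mono {L : List (List ℕ)} {i j : ℕ} (h : i ≤ j) :
    osum17 L i ≤ osum17 L j := by
  induction h with
  | refl => exact le_rfl
  | @step k h ih => exact le_trans ih (osum17_succ_le k)

lemma osum17_succF {L : List (List ℕ)} (j : Fin L.length) :
    osum17 L ((j : ℕ) + 1) = osum17 L (j : ℕ) + (L.get j).length := by
  rw [osum17_succ j.isLt]

lemma osum17_length {L : List (List ℕ)} : osum17 L L.length = L.flatten.length := by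
  unfold osum17
  rw [List.take_length, List.length_flatten]

lemma exists_block17 {L : List (List ℕ)} {r t : ℕ} (h1 : 1 ≤ r) (h2 : r ≤ osum17 L t) :
    ∃ j, j < t ∧ osum17 L j < r ∧ r ≤ osum17 L (j+1) := by
  induction t with
  | zero => have : osum17 L 0 = 0 := rfl; omega
  | succ k ih =>
    by_cases h : r ≤ osum17 L k
    · obtain ⟨j, hj, hj1, hj2⟩ := ih h
      exact ⟨j, by omega, hj1, hj2⟩
    · exact ⟨k, by omega, by omega, h2⟩

variable {L : List (List ℕ)}

/-- Glue diagrams indexed by the blocks. -/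
def Glue17 (L : List (List ℕ)) (S : Fin L.length → Diagram) : Diagram :=
  Finset.univ.biUnion fun i : Fin L.length => lift17 (osum17 L (i : ℕ)) (S i)

lemma mem_Glue17 {S : Fin L.length → Diagram} {q : ℕ × ℕ} :
    q ∈ Glue17 L S ↔ ∃ i : Fin L.length, q ∈ lift17 (osum17 L (i : ℕ)) (S i) := by
  simp [Glue17]

/-- All components lie in the respective Kohnert posets. -/
def GoodS17 (L : List (List ℕ)) (S : Fin L.length → Diagram) : Prop :=
  ∀ i, S i ∈ KD (keyDiagramL (L.get i))

lemma block_unique17 {i j : Fin L.length} {x : ℕ}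
    (h1 : osum17 L i < x) (h2 : x ≤ osum17 L (i+1))
    (h3 : osum17 L j < x) (h4 : x ≤ osum17 L (j+1)) : i = j := by
  rcases lt_trichotomy (i : ℕ) (j : ℕ) with h | h | h
  · have := osum17_mono (L := L) (i := (i : ℕ) + 1) (j := (j : ℕ)) (by omega)
    omega
  · exact Fin.ext h
  · have := osum17_mono (L := L) (i := (j : ℕ) + 1) (j := (i : ℕ)) (by omega)
    omega

lemma mem_glue_elim17 {S : Fin L.length → Diagram} (hB : ∀ i, Bnd17 (L.get i) (S i))
    {q : ℕ × ℕ} (hq : q ∈ Glue17 L S) :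
    ∃ j : Fin L.length, osum17 L j < q.1 ∧ q.1 ≤ osum17 L ((j : ℕ)+1) ∧
      (q.1 - osum17 L j, q.2) ∈ S j := by
  obtain ⟨j, hj⟩ := mem_Glue17.mp hq
  obtain ⟨p, hp, hp1, hp2⟩ := mem_lift17.mp hj
  obtain ⟨hb1, hb2, _, _⟩ := hB j p hp
  refine ⟨j, by omega, ?_, ?_⟩
  · rw [osum17_succF j]; omega
  · have : (q.1 - osum17 L (j : ℕ), q.2) = p := by
      apply Prod.ext <;> simp <;> omega
    rw [this]; exact hp

lemma mem_glue_intro17 {S : Fin L.length → Diagram} (j : Fin L.length) {q : ℕ × ℕ}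
    (h : (q.1 - osum17 L j, q.2) ∈ S j) (h1 : osum17 L j < q.1) : q ∈ Glue17 L S := by
  apply mem_Glue17.mpr
  exact ⟨j, mem_lift17.mpr ⟨_, h, by simp; omega, rfl⟩⟩

lemma glue_update17 {S : Fin L.length → Diagram} (hB : ∀ i, Bnd17 (L.get i) (S i))
    {i : Fin L.length} {ρ ρ' c : ℕ} (hρ : (ρ, c) ∈ S i) (h1 : 1 ≤ ρ') (h2 : ρ' < ρ) :
    Glue17 L (Function.update S i (insert (ρ', c) ((S i).erase (ρ, c)))) =
      insert (ρ' + osum17 L i, c) ((Glue17 L S).erase (ρ + osum17 L i, c)) := by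
  have hρmem : (ρ + osum17 L (i : ℕ), c) ∈ lift17 (osum17 L (i : ℕ)) (S i) :=
    mem_lift17.mpr ⟨_, hρ, rfl, rfl⟩
  have hρbd := hB i _ hρ
  ext ⟨x, y⟩
  simp only [Finset.mem_insert, Finset.mem_erase, mem_Glue17, Prod.mk.injEq, ne_eq]
  constructor
  · rintro ⟨j, hj⟩
    by_cases hji : j = i
    · subst hji
      rw [Function.update_self] at hj
      obtain ⟨p, hp, hpx, hpy⟩ := mem_lift17.mp hj
      rcases Finset.mem_insert.mp hp with rfl | hp'
      · left; constructor <;> simp_all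
      · obtain ⟨hpne, hpS⟩ := Finset.mem_erase.mp hp'
        right
        refine ⟨?_, j, mem_lift17.mpr ⟨p, hpS, hpx, hpy⟩⟩
        rintro ⟨hx, hy⟩
        apply hpne
        apply Prod.ext <;> simp <;> omega
    · rw [Function.update_of_ne hji] at hj
      right
      refine ⟨?_, j, hj⟩
      rintro ⟨hx, hy⟩
      subst hx; subst hy
      exact hji (block_unique17 (x := ρ + osum17 L (i : ℕ))
        (by obtain ⟨p, hp, hpx, hpy⟩ := mem_lift17.mp hj
            have := (hB j p hp).1; omega)
        (by obtain ⟨p, hp, hpx, hpy⟩ := mem_lift17.mp hj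
            have := (hB j p hp).2.1; rw [osum17_succF j]; omega)
        (by omega)
        (by rw [osum17_succF i]; omega))
  · rintro (⟨hx, hy⟩ | ⟨hne, j, hj⟩)
    · refine ⟨i, ?_⟩
      rw [Function.update_self]
      refine mem_lift17.mpr ⟨(ρ', c), Finset.mem_insert_self _ _, ?_, ?_⟩ <;>
        simp [hx, hy]
    · by_cases hji : j = i
      · subst hji
        obtain ⟨p, hp, hpx, hpy⟩ := mem_lift17.mp hj
        refine ⟨j, ?_⟩
        rw [Function.update_self]
        refine mem_lift17.mpr ⟨p, ?_, hpx, hpy⟩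
        apply Finset.mem_insert_of_mem
        refine Finset.mem_erase_of_ne_of_mem ?_ hp
        rintro rfl
        exact hne ⟨by omega, hpy.symm⟩
      · refine ⟨j, ?_⟩
        rw [Function.update_of_ne hji]
        exact hj

lemma glue_move17 {S : Fin L.length → Diagram} (hB : ∀ i, Bnd17 (L.get i) (S i))
    {i : Fin L.length} {S' : Diagram} (h : KMove (S i) S') :
    KMove (Glue17 L S) (Glue17 L (Function.update S i S')) := by
  obtain ⟨ρ, c, ρ', h1, h2, hρc, hright, hρ'c, hbet, rfl⟩ := h
  have hρbd := hB i _ hρc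
  refine ⟨ρ + osum17 L i, c, ρ' + osum17 L i, by omega, by omega,
    mem_glue_intro17 i (by simpa using hρc) (by omega), ?_, ?_, ?_, ?_⟩
  · intro c' hc' hmem
    obtain ⟨j, hj1, hj2, hj3⟩ := mem_glue_elim17 hB hmem
    have hji : j = i := block_unique17 hj1 hj2 (by omega) (by rw [osum17_succF i]; omega)
    subst hji
    exact hright c' hc' (by simpa using hj3)
  · intro hmem
    obtain ⟨j, hj1, hj2, hj3⟩ := mem_glue_elim17 hB hmem
    have hji : j = i := block_unique17 hj1 hj2 (by omega) (by rw [osum17_succF i]; omega)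
    subst hji
    exact hρ'c (by simpa using hj3)
  · intro r₁ hr1 hr2
    refine mem_glue_intro17 i ?_ (by omega)
    simpa using hbet (r₁ - osum17 L i) (by omega) (by omega)
  · rw [glue_update17 hB hρc h1 h2]

lemma glue_move_inv17 {S : Fin L.length → Diagram}
    (hB : ∀ i, Bnd17 (L.get i) (S i)) (hC : ∀ i, ColFull17 (L.get i) (S i))
    (hord : ∀ i j : Fin L.length, (i : ℕ) < (j : ℕ) → ∀ x ∈ L.get j, ∀ y ∈ L.get i, x ≤ y)
    {T' : Diagram} (h : KMove (Glue17 L S) T') :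
    ∃ (i : Fin L.length) (S' : Diagram),
      KMove (S i) S' ∧ T' = Glue17 L (Function.update S i S') := by
  obtain ⟨r, c, r', h1, h2, hrc, hright, hr'c, hbet, hT'⟩ := h
  obtain ⟨i, hio, hio2, hmem⟩ := mem_glue_elim17 hB hrc
  have hbd := hB i _ hmem
  have hr'o : osum17 L i < r' := by
    by_contra hle
    push_neg at hle
    obtain ⟨j, hjlt, hj1, hj2⟩ := exists_block17 (L := L) h1
      (le_trans hle (osum17_mono (le_refl _)))
    have hjF : j < L.length := lt_of_lt_of_le hjlt (le_of_lt i.isLt)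
    have hc1 : 1 ≤ c := hbd.2.2.1
    obtain ⟨x, hx, hcx⟩ := hbd.2.2.2
    have hcle : ∀ y ∈ L.get ⟨j, hjF⟩, c ≤ y := fun y hy =>
      le_trans hcx (hord ⟨j, hjF⟩ i hjlt x hx y hy)
    have hfull : (r' - osum17 L j, c) ∈ S ⟨j, hjF⟩ :=
      hC ⟨j, hjF⟩ c hc1 hcle _ (by omega) (by have := osum17_succ hjF; omega)
    exact hr'c (mem_glue_intro17 ⟨j, hjF⟩ (by simpa using hfull) hj1)
  refine ⟨i, insert (r' - osum17 L i, c) ((S i).erase (r - osum17 L i, c)),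
    ⟨r - osum17 L i, c, r' - osum17 L i, by omega, by omega, hmem, ?_, ?_, ?_, rfl⟩, ?_⟩
  · intro c' hc' hmem'
    exact hright c' hc' (mem_glue_intro17 i (by simpa using hmem') (by omega))
  · intro hmem'
    exact hr'c (mem_glue_intro17 i (by simpa using hmem') (by omega))
  · intro ρ₁ hρ1 hρ2
    have hmem₁ := hbet (ρ₁ + osum17 L i) (by omega) (by omega)
    obtain ⟨j, hj1, hj2, hj3⟩ := mem_glue_elim17 hB hmem₁
    have hji : j = i := block_unique17 hj1 hj2 (by omega)
      (by rw [osum17_succF i]; omega)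
    subst hji
    simpa using hj3
  · rw [hT', glue_update17 hB hmem (by omega) (by omega)]
    congr 1
    · apply Prod.ext <;> simp <;> omega
    · congr 1
      apply Prod.ext <;> simp <;> omega

lemma goodS_bnd17 {S : Fin L.length → Diagram} (hG : GoodS17 L S) :
    ∀ i, Bnd17 (L.get i) (S i) := fun i => bnd_reach17 (hG i)

lemma goodS_colfull17 {S : Fin L.length → Diagram} (hG : GoodS17 L S) :
    ∀ i, ColFull17 (L.get i) (S i) := fun i => colfull_reach17 (hG i)

lemma goodS_update17 {S : Fin L.length → Diagram} (hG : GoodS17 L S)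
    {i : Fin L.length} {S'' : Diagram} (h : KReach (S i) S'') :
    GoodS17 L (Function.update S i S'') := by
  intro j
  by_cases hji : j = i
  · subst hji; rw [Function.update_self]; exact Relation.ReflTransGen.trans (hG j) h
  · rw [Function.update_of_ne hji]; exact hG j

lemma glue_reach_single17 {S : Fin L.length → Diagram} (hG : GoodS17 L S)
    (i : Fin L.length) {S'' : Diagram} (h : KReach (S i) S'') :
    KReach (Glue17 L S) (Glue17 L (Function.update S i S'')) := by
  induction h with
  | refl => rw [Function.update_eq_self]; exact Relation.ReflTransGen.refl
  | @tail mid fin hR hstep ih =>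
    refine Relation.ReflTransGen.tail ih ?_
    have hGmid : GoodS17 L (Function.update S i mid) := goodS_update17 hG hR
    have := glue_move17 (goodS_bnd17 hGmid) (i := i)
      (S' := fin) (by rwa [Function.update_self])
    rwa [Function.update_idem] at this

lemma glue_reach17 {S S' : Fin L.length → Diagram} (hG : GoodS17 L S)
    (hG' : ∀ i, KReach (S i) (S' i)) : KReach (Glue17 L S) (Glue17 L S') := by
  have key : ∀ I : Finset (Fin L.length),
      KReach (Glue17 L S) (Glue17 L fun j => if j ∈ I then S' j else S j) := by
    intro I
    induction I using Finset.induction_on with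
    | empty => exact Relation.ReflTransGen.refl
    | @insert a I ha ih =>
      have hGF : GoodS17 L (fun j => if j ∈ I then S' j else S j) := by
        intro j
        by_cases hj : j ∈ I
        · simp only [hj, if_true]
          exact Relation.ReflTransGen.trans (hG j) (hG' j)
        · simp only [hj, if_false]; exact hG j
      have hstep := glue_reach_single17 hGF a (S'' := S' a)
        (by simp only [ha, if_false]; exact hG' a)
      have heq : (Function.update (fun j => if j ∈ I then S' j else S j) a (S' a)) =
          fun j => if j ∈ insert a I then S' j else S j := by
        funext j
        by_cases hj : j = a
        · subst hj; simp [Function.update_self]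
        · simp [Function.update_of_ne hj, hj]
      rw [heq] at hstep
      exact Relation.ReflTransGen.trans ih hstep
  have := key Finset.univ
  simpa using this

lemma reach_glue17 {S : Fin L.length → Diagram} (hG : GoodS17 L S)
    (hord : ∀ i j : Fin L.length, (i : ℕ) < (j : ℕ) → ∀ x ∈ L.get j, ∀ y ∈ L.get i, x ≤ y)
    {T : Diagram} (h : KReach (Glue17 L S) T) :
    ∃ S', (∀ i, KReach (S i) (S' i)) ∧ T = Glue17 L S' := by
  induction h with
  | refl => exact ⟨S, fun i => Relation.ReflTransGen.refl, rfl⟩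
  | @tail mid fin hR hstep ih =>
    obtain ⟨S₀, hcomp, rfl⟩ := ih
    have hG₀ : GoodS17 L S₀ := fun i => Relation.ReflTransGen.trans (hG i) (hcomp i)
    obtain ⟨i, S'', hK, rfl⟩ :=
      glue_move_inv17 (goodS_bnd17 hG₀) (goodS_colfull17 hG₀) hord hstep
    refine ⟨Function.update S₀ i S'', fun j => ?_, rfl⟩
    by_cases hji : j = i
    · subst hji; rw [Function.update_self]
      exact Relation.ReflTransGen.tail (hcomp j) hK
    · rw [Function.update_of_ne hji]; exact hcomp j

lemma unlift_glue17 {S : Fin L.length → Diagram} (hB : ∀ i, Bnd17 (L.get i) (S i))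
    (i : Fin L.length) :
    unlift17 (osum17 L i) (L.get i).length (Glue17 L S) = S i := by
  ext ⟨x, y⟩
  simp only [unlift17, Finset.mem_image, Finset.mem_filter]
  constructor
  · rintro ⟨⟨qx, qy⟩, ⟨hq, hq1, hq2⟩, heq⟩
    obtain ⟨j, hj1, hj2, hj3⟩ := mem_glue_elim17 hB hq
    have hji : j = i := block_unique17 hj1 hj2 (by simpa using hq1)
      (by rw [osum17_succ i.isLt]; simpa using hq2)
    subst hji
    have : (x, y) = ((qx : ℕ) - osum17 L (j : ℕ), qy) := by
      simp only [Prod.mk.injEq] at heq ⊢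
      exact ⟨heq.1.symm, heq.2.symm⟩
    rw [this]; exact hj3
  · intro hxy
    have hbd := hB i _ hxy
    refine ⟨(x + osum17 L i, y), ⟨?_, by omega, by omega⟩, ?_⟩
    · exact mem_glue_intro17 i (by simpa using hxy) (by simp; omega)
    · simp

lemma getD_join17 : ∀ (L : List (List ℕ)) (i k : ℕ) (hi : i < L.length),
    k < (L.get ⟨i, hi⟩).length →
    L.flatten.getD (osum17 L i + k) 0 = (L.get ⟨i, hi⟩).getD k 0 := by
  intro L
  induction L with
  | nil => intro i k hi; simp at hi
  | cons B rest ih =>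
    intro i k hi hk
    cases i with
    | zero =>
      simp only [List.get] at hk ⊢
      show (B ++ rest.flatten).getD (osum17 (B :: rest) 0 + k) 0 = B.getD k 0
      have : osum17 (B :: rest) 0 = 0 := rfl
      rw [this, Nat.zero_add]
      rw [List.getD_append _ _ _ _ (by simpa using hk)]
    | succ j =>
      have hj : j < rest.length := by simpa using hi
      have hosum : osum17 (B :: rest) (j+1) = B.length + osum17 rest j := by
        unfold osum17
        simp [List.take_succ_cons]
      show (B ++ rest.flatten).getD (osum17 (B :: rest) (j+1) + k) 0 = _
      rw [hosum]
      rw [List.getD_append_right _ _ _ _ (by omega)]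
      have : B.length + osum17 rest j + k - B.length = osum17 rest j + k := by omega
      rw [this]
      exact ih j k hj (by simpa using hk)

lemma glue_key17 : keyDiagramL L.flatten = Glue17 L (fun i => keyDiagramL (L.get i)) := by
  ext ⟨r, c⟩
  rw [mem_keyDiagramL]
  constructor
  · rintro ⟨h1, h2, h3, h4⟩
    rw [← osum17_length] at h2
    obtain ⟨j, hjlt, hj1, hj2⟩ := exists_block17 h1 h2
    have hlen : osum17 L (j+1) = osum17 L j + (L.get ⟨j, hjlt⟩).length := osum17_succ hjlt
    refine mem_glue_intro17 ⟨j, hjlt⟩ ?_ hj1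
    rw [mem_keyDiagramL]
    refine ⟨?_, ?_, h3, ?_⟩
    · show 1 ≤ r - osum17 L j; omega
    · show r - osum17 L j ≤ (L.get ⟨j, hjlt⟩).length; omega
    · show c ≤ (L.get ⟨j, hjlt⟩).getD (r - osum17 L j - 1) 0
      have := getD_join17 L j (r - 1 - osum17 L j) hjlt (by omega)
      have harg : osum17 L j + (r - 1 - osum17 L j) = r - 1 := by omega
      rw [harg] at this
      have harg2 : r - osum17 L j - 1 = r - 1 - osum17 L j := by omega
      rw [harg2, ← this]
      exact h4
  · intro hmem
    obtain ⟨j, hj1, hj2, hj3⟩ := mem_glue_elim17 (fun i => bnd_key17 _) hmem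
    rw [mem_keyDiagramL] at hj3
    obtain ⟨hh1, hh2, hh3, hh4⟩ := hj3
    have hlen : osum17 L ((j : ℕ)+1) = osum17 L j + (L.get j).length := osum17_succ j.isLt
    refine ⟨by omega, ?_, hh3, ?_⟩
    · rw [← osum17_length]
      exact le_trans hj2 (osum17_mono (by omega))
    · have hfix : (L.get ⟨(j : ℕ), j.isLt⟩).length = (L.get j).length := rfl
      have := getD_join17 L j (r - 1 - osum17 L j) j.isLt (by omega)
      have harg : osum17 L ↑j + (r - 1 - osum17 L ↑j) = r - 1 := by omega
      rw [harg] at this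
      rw [this]
      have harg2 : r - 1 - osum17 L ↑j = r - osum17 L ↑j - 1 := by omega
      rw [harg2]
      exact hh4

lemma chain_le17 (hblocks : ∀ b ∈ L, b ≠ [])
    (hchain : L.Chain' fun A B => ∀ x ∈ A, ∀ y ∈ B, y ≤ x) :
    ∀ i j : Fin L.length, (i : ℕ) < (j : ℕ) → ∀ x ∈ L.get j, ∀ y ∈ L.get i, x ≤ y := by
  have hadj := List.isChain_iff_getElem.mp hchain
  have key : ∀ d (i : ℕ) (h : i + d + 1 < L.length),
      ∀ x ∈ L.get ⟨i + d + 1, h⟩, ∀ y ∈ L.get ⟨i, by omega⟩, x ≤ y := by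
    intro d
    induction d with
    | zero => intro i h x hx y hy; exact hadj i (by omega) y hy x hx
    | succ e ih =>
      intro i h x hx y hy
      have hmid : i + e + 1 < L.length := by omega
      obtain ⟨z, hz⟩ := List.exists_mem_of_ne_nil _ (hblocks _ (List.get_mem L ⟨_, hmid⟩))
      exact le_trans (hadj (i + e + 1) (by omega) z hz x hx) (ih i hmid z hz y hy)
  intro i j hij x hx y hy
  have h : (i : ℕ) + ((j : ℕ) - (i : ℕ) - 1) + 1 < L.length := by omega
  have hj' : L.get ⟨(i : ℕ) + ((j : ℕ) - (i : ℕ) - 1) + 1, h⟩ = L.get j := by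
    congr 1
    exact Fin.ext (by simp; omega)
  exact key _ _ h x (hj' ▸ hx) y hy

end Aux17

/-- If `a` is a pure composition with pure decomposition `(α₁,…,α_m)`, then
`P(𝔻(a)) ≅ P(𝔻(α₁)) × ⋯ × P(𝔻(α_m))` with the componentwise order. -/
theorem stmt_17 (L : List (List ℕ)) (a : List ℕ)
    (ha : a = L.flatten) (hpure : PureCompL a)
    (hblocks : ∀ b ∈ L, b ≠ [])
    (hchain : L.Chain' fun A B => ∀ x ∈ A, ∀ y ∈ B, y ≤ x) :
    ∃ f : Diagram → (Fin L.length → Diagram),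
      (∀ T ∈ KD (keyDiagramL a), ∀ i : Fin L.length,
        f T i ∈ KD (keyDiagramL (L.get i))) ∧
      (∀ T1 ∈ KD (keyDiagramL a), ∀ T2 ∈ KD (keyDiagramL a), f T1 = f T2 → T1 = T2) ∧
      (∀ g : Fin L.length → Diagram, (∀ i, g i ∈ KD (keyDiagramL (L.get i))) →
        ∃ T ∈ KD (keyDiagramL a), f T = g) ∧
      (∀ T1 ∈ KD (keyDiagramL a), ∀ T2 ∈ KD (keyDiagramL a),
        (KLe T1 T2 ↔ ∀ i, KLe (f T1 i) (f T2 i))) := by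
  subst ha
  have hord := chain_le17 hblocks hchain
  have hG₀ : GoodS17 L (fun i => keyDiagramL (L.get i)) :=
    fun i => Relation.ReflTransGen.refl
  have hkey : keyDiagramL L.flatten = Glue17 L (fun i => keyDiagramL (L.get i)) := glue_key17
  have master : ∀ T ∈ KD (keyDiagramL L.flatten), ∃ S, GoodS17 L S ∧ T = Glue17 L S ∧
      ∀ i : Fin L.length, unlift17 (osum17 L (i : ℕ)) (L.get i).length T = S i := by
    intro T hT
    have hT' : KReach (Glue17 L (fun i => keyDiagramL (L.get i))) T := by
      rw [← hkey]; exact hT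
    obtain ⟨S, hS, rfl⟩ := reach_glue17 hG₀ hord hT'
    have hGS : GoodS17 L S := fun i => Relation.ReflTransGen.trans (hG₀ i) (hS i)
    exact ⟨S, hGS, rfl, fun i => unlift_glue17 (goodS_bnd17 hGS) i⟩
  refine ⟨fun T i => unlift17 (osum17 L (i : ℕ)) (L.get i).length T, ?_, ?_, ?_, ?_⟩
  · intro T hT i
    obtain ⟨S, hGS, rfl, hrec⟩ := master T hT
    show unlift17 (osum17 L (i : ℕ)) (L.get i).length (Glue17 L S) ∈ KD (keyDiagramL (L.get i))
    rw [hrec i]; exact hGS i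
  · intro T1 h1 T2 h2 hf
    obtain ⟨S1, hG1, rfl, hrec1⟩ := master _ h1
    obtain ⟨S2, hG2, rfl, hrec2⟩ := master _ h2
    congr 1
    funext i
    rw [← hrec1 i, ← hrec2 i]
    exact congrFun hf i
  · intro g hg
    refine ⟨Glue17 L g, ?_, ?_⟩
    · show KReach (keyDiagramL L.flatten) _
      rw [hkey]
      exact glue_reach17 hG₀ (fun i => hg i)
    · funext i
      exact unlift_glue17 (goodS_bnd17 hg) i
  · intro T1 h1 T2 h2
    obtain ⟨S1, hG1, rfl, hrec1⟩ := master _ h1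
    obtain ⟨S2, hG2, rfl, hrec2⟩ := master _ h2
    constructor
    · intro hle i
      obtain ⟨S', hS', heq⟩ := reach_glue17 hG2 hord hle
      have hGS' : GoodS17 L S' :=
        fun j => Relation.ReflTransGen.trans (hG2 j) (hS' j)
      have hSi : S1 i = S' i := by
        rw [← unlift_glue17 (goodS_bnd17 hG1) i, heq,
          unlift_glue17 (goodS_bnd17 hGS') i]
      show KReach (unlift17 (osum17 L (i : ℕ)) (L.get i).length (Glue17 L S2))
        (unlift17 (osum17 L (i : ℕ)) (L.get i).length (Glue17 L S1))
      rw [hrec1 i, hrec2 i, hSi]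
      exact hS' i
    · intro hcomp
      show KReach (Glue17 L S2) (Glue17 L S1)
      apply glue_reach17 hG2
      intro i
      have h' : KReach (unlift17 (osum17 L (i : ℕ)) (L.get i).length (Glue17 L S2))
          (unlift17 (osum17 L (i : ℕ)) (L.get i).length (Glue17 L S1)) := hcomp i
      show KReach (S2 i) (S1 i)
      rwa [hrec1 i, hrec2 i] at h'

end KohnertPaper
end
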